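/- Let T be a left continuous t-norm and L a right continuous L-operation. If (L⊗T)(f,g) is continuous on (0,∞] for all continuous d.d.f.'s f and g, then L satisfies the strict monotonicity condition (LS): x < x' and y < y' imply L(x,y) < L(x',y'). -/

import Mathlib

open ENNReal Set
open Topology Filter

/-- A distance distribution function: increasing `f : [0,∞] → [0,1]` with
`f 0 = 0`, `f ∞ = 1`, left continuous on `(0,∞)`. -/
def IsDDF (f : ℝ≥0∞ → ℝ≥0∞) : Prop :=
  Monotone f ∧ (∀ x, f x ≤ 1) ∧ f 0 = 0 ∧ f ⊤ = 1 ∧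
    ∀ x : ℝ≥0∞, 0 < x → x < ⊤ → f x = ⨆ y ∈ Set.Iio x, f y

/-- The largest quasi-inverse `f∨ y = inf {x | f x > y}`. -/
noncomputable def qInv (f : ℝ≥0∞ → ℝ≥0∞) : ℝ≥0∞ → ℝ≥0∞ :=
  fun y => sInf {x | y < f x}

/-- The unit interval `[0,1]` inside `[0,∞]`. -/
def I01 : Set ℝ≥0∞ := Set.Icc 0 1

/-- A left continuous t-norm on `[0,1]`: commutative, associative, increasing in each
place, identity `1`, left continuous in each variable. -/
def IsLeftContTNorm (T : ℝ≥0∞ → ℝ≥0∞ → ℝ≥0∞) : Prop :=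
  (∀ p ∈ I01, ∀ q ∈ I01, T p q ∈ I01) ∧
  (∀ p ∈ I01, ∀ q ∈ I01, T p q = T q p) ∧
  (∀ p ∈ I01, ∀ q ∈ I01, ∀ r ∈ I01, T (T p q) r = T p (T q r)) ∧
  (∀ p ∈ I01, T p 1 = p) ∧
  (∀ q ∈ I01, ∀ p₁ ∈ I01, ∀ p₂ ∈ I01, p₁ ≤ p₂ → T p₁ q ≤ T p₂ q) ∧
  (∀ q ∈ I01, ∀ p ∈ I01, 0 < p → T p q = ⨆ p' ∈ Set.Iio p, T p' q)

/-- A right continuous `L`-operation on `[0,∞]`: commutative, associative, increasing in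
each place, identity `0`, right continuous in each variable. -/
def IsRightContLOp (L : ℝ≥0∞ → ℝ≥0∞ → ℝ≥0∞) : Prop :=
  (∀ x y, L x y = L y x) ∧
  (∀ x y z, L (L x y) z = L x (L y z)) ∧
  (∀ x, L x 0 = x) ∧
  (∀ y x₁ x₂, x₁ ≤ x₂ → L x₁ y ≤ L x₂ y) ∧
  (∀ y x, x < ⊤ → L x y = ⨅ x' ∈ Set.Ioi x, L x' y)

/-- Joint continuity of a t-norm on `[0,1] × [0,1]`. -/
def TNormContinuous (T : ℝ≥0∞ → ℝ≥0∞ → ℝ≥0∞) : Prop :=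
  ContinuousOn (fun pq : ℝ≥0∞ × ℝ≥0∞ => T pq.1 pq.2) (I01 ×ˢ I01)

/-- The tensor-product triangle function:
`(L ⊗ T)(f,g)(x) = sup {T (f r) (g s) | L r s < x}` for `x < ∞`, and `1` at `∞`. -/
noncomputable def tensor (L T : ℝ≥0∞ → ℝ≥0∞ → ℝ≥0∞) (f g : ℝ≥0∞ → ℝ≥0∞) :
    ℝ≥0∞ → ℝ≥0∞ :=
  fun x => if x = ⊤ then 1 else ⨆ r, ⨆ s, ⨆ _ : L r s < x, T (f r) (g s)

/-! ### Auxiliary: continuous piecewise-linear ramp d.d.f.'s -/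

noncomputable def ramp (a b : ℝ≥0∞) : ℝ≥0∞ → ℝ≥0∞ :=
  fun t => min 1 ((t - a) / (b - a))

lemma ramp_mono (a b : ℝ≥0∞) : Monotone (ramp a b) := fun _ _ h =>
  min_le_min le_rfl (ENNReal.div_le_div_right (tsub_le_tsub_right h a) _)

lemma ramp_le_one (a b t : ℝ≥0∞) : ramp a b t ≤ 1 := min_le_left _ _

lemma ramp_eq_zero (a b : ℝ≥0∞) {t : ℝ≥0∞} (ht : t ≤ a) : ramp a b t = 0 := by
  simp [ramp, tsub_eq_zero_of_le ht, ENNReal.zero_div]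

lemma ramp_eq_one {a b : ℝ≥0∞} (hab : a < b) (hb : b ≠ ⊤) {t : ℝ≥0∞} (ht : b ≤ t) :
    ramp a b t = 1 := by
  have h0 : b - a ≠ 0 := by simpa [tsub_eq_zero_iff_le] using hab.not_ge
  have hnt : b - a ≠ ⊤ := (tsub_le_self.trans_lt hb.lt_top).ne
  have : (1 : ℝ≥0∞) ≤ (t - a) / (b - a) := by
    rw [ENNReal.le_div_iff_mul_le (Or.inl h0) (Or.inl hnt), one_mul]
    exact tsub_le_tsub_right ht a
  simp [ramp, min_eq_left this]

lemma ramp_cont {a b : ℝ≥0∞} (h0 : b - a ≠ 0) : Continuous (ramp a b) := by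
  have : Continuous fun t : ℝ≥0∞ => (t - a) / (b - a) :=
    (ENNReal.continuous_div_const _ h0).comp (ENNReal.continuous_sub_right a)
  exact continuous_const.min this

lemma mono_cont_sup {f : ℝ≥0∞ → ℝ≥0∞} (hm : Monotone f) (hc : Continuous f)
    {x : ℝ≥0∞} (hx : 0 < x) : f x = ⨆ y ∈ Set.Iio x, f y := by
  have hne : (Iio x).Nonempty := ⟨0, hx⟩
  have hnb : (𝓝[<] x).NeBot := by
    rw [← mem_closure_iff_nhdsWithin_neBot, closure_Iio' hne]
    exact self_mem_Iic
  have h1 : Filter.Tendsto f (𝓝[<] x) (𝓝 (sSup (f '' Iio x))) := hm.tendsto_nhdsLT x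
  have h2 : Filter.Tendsto f (𝓝[<] x) (𝓝 (f x)) := (hc.tendsto x).mono_left nhdsWithin_le_nhds
  rw [tendsto_nhds_unique h2 h1, sSup_image]

lemma ramp_ddf {a b : ℝ≥0∞} (hab : a < b) (hb : b ≠ ⊤) : IsDDF (ramp a b) := by
  have h0 : b - a ≠ 0 := by simpa [tsub_eq_zero_iff_le] using hab.not_ge
  exact ⟨ramp_mono a b, ramp_le_one a b, ramp_eq_zero a b (zero_le : 0 ≤ a),
    ramp_eq_one hab hb le_top, fun x hx _ => mono_cont_sup (ramp_mono a b) (ramp_cont h0) hx⟩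

theorem LS_of_tensor_preserves_continuity (T L : ℝ≥0∞ → ℝ≥0∞ → ℝ≥0∞)
    (hT : IsLeftContTNorm T) (hL : IsRightContLOp L)
    (h : ∀ f g : ℝ≥0∞ → ℝ≥0∞, IsDDF f → Continuous f → IsDDF g → Continuous g →
      ContinuousOn (tensor L T f g) (Set.Ioi 0)) :
    ∀ x x' y y' : ℝ≥0∞, x < x' → y < y' → L x y < L x' y' := by
  intro x x' y y' hxx hyy
  obtain ⟨Tcl, Tcomm, -, Tid, Tmono, -⟩ := hT
  obtain ⟨Lcomm, -, Lid, Lmono, -⟩ := hL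
  have mem0 : (0 : ℝ≥0∞) ∈ I01 := ⟨le_rfl, zero_le_one⟩
  have mem1 : (1 : ℝ≥0∞) ∈ I01 := ⟨zero_le_one, le_rfl⟩
  have Tzero : ∀ q ∈ I01, T 0 q = 0 := by
    intro q hq
    refine le_antisymm ?_ (zero_le)
    calc T 0 q = T q 0 := Tcomm 0 mem0 q hq
      _ ≤ T 1 0 := Tmono 0 mem0 q hq 1 mem1 hq.2
      _ = T 0 1 := Tcomm 1 mem1 0 mem0
      _ = 0 := Tid 0 mem0
  have mono2 : ∀ a b a' b' : ℝ≥0∞, a ≤ a' → b ≤ b' → L a b ≤ L a' b' := by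
    intro a b a' b' ha hb
    calc L a b ≤ L a' b := Lmono b a a' ha
      _ = L b a' := Lcomm _ _
      _ ≤ L b' a' := Lmono a' b b' hb
      _ = L a' b' := Lcomm _ _
  by_contra hcon
  push_neg at hcon
  have hEq : L x y = L x' y' := le_antisymm (mono2 _ _ _ _ hxx.le hyy.le) hcon
  set c := L x y with hcdef
  have hx'c : x' ≤ c := by
    have h1 := mono2 x' 0 x' y' le_rfl (zero_le)
    rw [Lid x'] at h1
    rw [hEq]; exact h1
  have hc0 : 0 < c := lt_of_lt_of_le ((zero_le : 0 ≤ x).trans_lt hxx) hx'c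
  have hxt : x ≠ ⊤ := hxx.ne_top
  have hyt : y ≠ ⊤ := hyy.ne_top
  set b := min x' (x + 1) with hbdef
  set d := min y' (y + 1) with hddef
  have hxb : x < b := lt_min hxx (ENNReal.lt_add_right hxt one_ne_zero)
  have hyd : y < d := lt_min hyy (ENNReal.lt_add_right hyt one_ne_zero)
  have hbt : b ≠ ⊤ :=
    ((min_le_right _ _).trans_lt (ENNReal.add_lt_top.2 ⟨hxt.lt_top, one_lt_top⟩)).ne
  have hdt : d ≠ ⊤ :=
    ((min_le_right _ _).trans_lt (ENNReal.add_lt_top.2 ⟨hyt.lt_top, one_lt_top⟩)).ne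
  set f := ramp x b with hfdef
  set g := ramp y d with hgdef
  have hmemf : ∀ r, f r ∈ I01 := fun r => ⟨zero_le, ramp_le_one _ _ _⟩
  have hmemg : ∀ s, g s ∈ I01 := fun s => ⟨zero_le, ramp_le_one _ _ _⟩
  have hcont : ContinuousOn (tensor L T f g) (Set.Ioi 0) :=
    h f g (ramp_ddf hxb hbt) (ramp_cont (by simpa [tsub_eq_zero_iff_le] using hxb.not_ge))
      (ramp_ddf hyd hdt) (ramp_cont (by simpa [tsub_eq_zero_iff_le] using hyd.not_ge))
  have Fzero : ∀ t, 0 < t → t ≤ c → t ≠ ⊤ → tensor L T f g t = 0 := by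
    intro t ht htc htt
    simp only [tensor, if_neg htt]
    refine le_antisymm (iSup_le fun r => iSup_le fun s => iSup_le fun hrs => ?_) (zero_le)
    have hor : r < x ∨ s < y := by
      by_contra hno
      push_neg at hno
      exact absurd (lt_of_lt_of_le hrs htc) (not_lt.2 (mono2 x y r s hno.1 hno.2))
    rcases hor with hr | hs
    · have hfr : f r = 0 := ramp_eq_zero x b hr.le
      rw [hfr, Tzero _ (hmemg s)]
    · have hgs : g s = 0 := ramp_eq_zero y d hs.le
      rw [hgs, Tcomm _ (hmemf r) 0 mem0, Tzero _ (hmemf r)]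
  have Fone : ∀ t, c < t → tensor L T f g t = 1 := by
    intro t hct
    rcases eq_or_ne t ⊤ with rfl | htt
    · simp [tensor]
    · simp only [tensor, if_neg htt]
      refine le_antisymm
        (iSup_le fun r => iSup_le fun s => iSup_le fun _ => (Tcl _ (hmemf r) _ (hmemg s)).2) ?_
      have hfx' : f x' = 1 := ramp_eq_one hxb hbt (min_le_left _ _)
      have hgy' : g y' = 1 := ramp_eq_one hyd hdt (min_le_left _ _)
      have hlt : L x' y' < t := by rw [← hEq]; exact hct
      calc (1 : ℝ≥0∞) = T (f x') (g y') := by rw [hfx', hgy', Tid 1 mem1]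
        _ ≤ ⨆ _ : L x' y' < t, T (f x') (g y') := le_iSup_of_le hlt le_rfl
        _ ≤ ⨆ s, ⨆ _ : L x' s < t, T (f x') (g s) :=
            le_iSup (fun s => ⨆ _ : L x' s < t, T (f x') (g s)) y'
        _ ≤ ⨆ r, ⨆ s, ⨆ _ : L r s < t, T (f r) (g s) :=
            le_iSup (fun r => ⨆ s, ⨆ _ : L r s < t, T (f r) (g s)) x'
  rcases eq_or_ne c ⊤ with hct | hct
  · have cw : ContinuousWithinAt (tensor L T f g) (Set.Ioi 0) ⊤ :=
      hcont ⊤ (Set.mem_Ioi.mpr zero_lt_top)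
    have cw2 : Filter.Tendsto (tensor L T f g) (𝓝[Set.Ioo 0 ⊤] ⊤) (𝓝 (tensor L T f g ⊤)) :=
      cw.mono fun z hz => hz.1
    have hFtop : tensor L T f g ⊤ = 1 := by simp [tensor]
    rw [hFtop] at cw2
    have hnb : (𝓝[Set.Ioo 0 ⊤] (⊤ : ℝ≥0∞)).NeBot := by
      rw [← mem_closure_iff_nhdsWithin_neBot,
        closure_Ioo (show (0 : ℝ≥0∞) ≠ ⊤ from zero_ne_top)]
      exact right_mem_Icc.2 le_top
    have heq : (tensor L T f g) =ᶠ[𝓝[Set.Ioo 0 ⊤] (⊤ : ℝ≥0∞)] fun _ => (0 : ℝ≥0∞) :=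
      eventually_nhdsWithin_of_forall fun z hz => Fzero z hz.1 (by rw [hct]; exact le_top) hz.2.ne
    have := tendsto_nhds_unique (Filter.Tendsto.congr' heq cw2)
      (tendsto_const_nhds : Filter.Tendsto (fun _ : ℝ≥0∞ => (0 : ℝ≥0∞)) _ _)
    simp at this
  · have cw : ContinuousWithinAt (tensor L T f g) (Set.Ioi 0) c := hcont c (Set.mem_Ioi.mpr hc0)
    have cw2 : Filter.Tendsto (tensor L T f g) (𝓝[Set.Ioi c] c) (𝓝 (tensor L T f g c)) :=
      cw.mono (Set.Ioi_subset_Ioi hc0.le)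
    rw [Fzero c hc0 le_rfl hct] at cw2
    have hnb : (𝓝[>] c).NeBot := by
      rw [← mem_closure_iff_nhdsWithin_neBot, closure_Ioi' (show (Set.Ioi c).Nonempty from ⟨⊤, hct.lt_top⟩)]
      exact self_mem_Ici
    have heq : (tensor L T f g) =ᶠ[𝓝[>] c] fun _ => (1 : ℝ≥0∞) :=
      eventually_nhdsWithin_of_forall fun z hz => Fone z hz
    have := tendsto_nhds_unique (Filter.Tendsto.congr' heq cw2)
      (tendsto_const_nhds : Filter.Tendsto (fun _ : ℝ≥0∞ => (1 : ℝ≥0∞)) _ _)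
    simp at this
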